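/- arXiv:0809.4557 — 5 statements merged into one kernel-verified Lean document; each statement's English description precedes it below -/
import Mathlib

section
/- Let u : ℝ≥0 → ℝ≥0 be a function such that x ↦ u(x) − x is decreasing, and let ũ be its increasing regularization. Then the set S := {x ∈ ℝ≥0 : ũ(x) = u(x)} is a Borel set and its lower density satisfies ρ₋(S) ≥ liminf_{x→∞} u(x)/x. -/
open Set Topology Filter MeasureTheory

private lemma le_add_eps {a b : ℝ} (h : ∀ ε : ℝ, 0 < ε → a ≤ b + ε) : a ≤ b := by
  by_contra hc
  push_neg at hc
  have := h ((a - b) / 2) (by linarith)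
  linarith

/-- The right-regularization of `fun z => u z - z`. -/
private noncomputable def pReg (u : ℝ → ℝ) (x : ℝ) : ℝ :=
  sSup ((fun z => u z - z) '' Set.Ioi x)

/-- If `u : ℝ≥0 → ℝ≥0` (modelled on `Ici 0 ⊆ ℝ`) is such that `x ↦ u x - x` is
decreasing, and `uu` is its increasing regularization, then
`S = {x ≥ 0 | uu x = u x}` is Borel and its lower density is at least
`liminf_{x→∞} u x / x`. -/
theorem stmt_1 (u : ℝ → ℝ) (hpos : ∀ x ∈ Set.Ici (0 : ℝ), 0 ≤ u x)
    (hdec : AntitoneOn (fun x => u x - x) (Set.Ici 0))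
    (uu : ℝ → ℝ) (huu : ∀ x ∈ Set.Ici (0 : ℝ), uu x = sInf (u '' Set.Ici x)) :
    MeasurableSet {x : ℝ | 0 ≤ x ∧ uu x = u x} ∧
      Filter.liminf (fun x : ℝ => u x / x) Filter.atTop ≤
        Filter.liminf
          (fun x : ℝ =>
            (MeasureTheory.volume ({y : ℝ | 0 ≤ y ∧ uu y = u y} ∩ Set.Icc 0 x)).toReal / x)
          Filter.atTop := by
  -- Basic facts about `uu`
  have hne : ∀ x : ℝ, (u '' Set.Ici x).Nonempty := fun x => ⟨u x, x, le_refl x, rfl⟩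
  have hbdd : ∀ x : ℝ, 0 ≤ x → BddBelow (u '' Set.Ici x) := by
    intro x hx
    refine ⟨0, ?_⟩
    rintro a ⟨y, hy, rfl⟩
    exact hpos y (le_trans hx hy)
  have huu_le : ∀ x : ℝ, 0 ≤ x → uu x ≤ u x := by
    intro x hx
    rw [huu x hx]
    exact csInf_le (hbdd x hx) ⟨x, le_refl x, rfl⟩
  have huu_nonneg : ∀ x : ℝ, 0 ≤ x → 0 ≤ uu x := by
    intro x hx
    rw [huu x hx]
    refine le_csInf (hne x) ?_
    rintro b ⟨y, hy, rfl⟩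
    exact hpos y (le_trans hx hy)
  have huu_mono : ∀ x y : ℝ, 0 ≤ x → x ≤ y → uu x ≤ uu y := by
    intro x y hx hxy
    rw [huu x hx, huu y (le_trans hx hxy)]
    exact csInf_le_csInf (hbdd x hx) (hne y) (Set.image_mono (Set.Ici_subset_Ici.mpr hxy))
  have hlip_u : ∀ x y : ℝ, 0 ≤ x → x ≤ y → u y ≤ u x + (y - x) := by
    intro x y hx hxy
    have h2 : u y - y ≤ u x - x := hdec hx (le_trans hx hxy) hxy
    linarith
  have huu_lip : ∀ x y : ℝ, 0 ≤ x → x ≤ y → uu y ≤ uu x + (y - x) := by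
    intro x y hx hxy
    have hy : (0:ℝ) ≤ y := le_trans hx hxy
    apply le_add_eps
    intro ε hε
    have h1 : sInf (u '' Set.Ici x) < uu x + ε := by
      rw [← huu x hx]; linarith
    obtain ⟨a, ⟨z, hz, rfl⟩, hlt⟩ := exists_lt_of_csInf_lt (hne x) h1
    have hz' : x ≤ z := hz
    rcases le_or_gt y z with h | h
    · have h2 : uu y ≤ u z := by
        rw [huu y hy]; exact csInf_le (hbdd y hy) ⟨z, h, rfl⟩
      linarith
    · have h2 : uu y ≤ u y := huu_le y hy
      have h3 : u y ≤ u z + (y - z) := hlip_u z y (le_trans hx hz') (le_of_lt h)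
      linarith
  have huu_lipOn : LipschitzOnWith 1 uu (Set.Ici 0) := by
    apply LipschitzOnWith.of_dist_le_mul
    intro x hx y hy
    have hx' : (0:ℝ) ≤ x := hx
    have hy' : (0:ℝ) ≤ y := hy
    rw [Real.dist_eq, Real.dist_eq, NNReal.coe_one, one_mul]
    rcases le_total x y with h | h
    · have h1 := huu_mono x y hx' h
      have h2 := huu_lip x y hx' h
      rw [abs_sub_le_iff]
      constructor
      · have : |x - y| = y - x := by rw [abs_sub_comm]; exact abs_of_nonneg (by linarith)
        linarith [this]
      · have : |x - y| = y - x := by rw [abs_sub_comm]; exact abs_of_nonneg (by linarith)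
        linarith [this]
    · have h1 := huu_mono y x hy' h
      have h2 := huu_lip y x hy' h
      rw [abs_sub_le_iff]
      constructor
      · have : |x - y| = x - y := abs_of_nonneg (by linarith)
        linarith [this]
      · have : |x - y| = x - y := abs_of_nonneg (by linarith)
        linarith [this]
  have huu_cont : ContinuousOn uu (Set.Ici 0) := huu_lipOn.continuousOn
  -- Facts about `pReg u`
  have hgne : ∀ x : ℝ, ((fun z => u z - z) '' Set.Ioi x).Nonempty :=
    fun x => ⟨u (x+1) - (x+1), x+1, lt_add_one x, rfl⟩
  have hgbdd : ∀ x : ℝ, 0 ≤ x → BddAbove ((fun z => u z - z) '' Set.Ioi x) := by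
    intro x hx
    refine ⟨u x - x, ?_⟩
    rintro a ⟨w, hw, rfl⟩
    exact hdec hx (le_trans hx (le_of_lt hw)) (le_of_lt hw)
  have hp_ge : ∀ x w : ℝ, 0 ≤ x → x < w → u w - w ≤ pReg u x := by
    intro x w hx hw
    exact le_csSup (hgbdd x hx) ⟨w, hw, rfl⟩
  have hp_le : ∀ x : ℝ, 0 ≤ x → pReg u x ≤ u x - x := by
    intro x hx
    refine csSup_le (hgne x) ?_
    rintro a ⟨w, hw, rfl⟩
    exact hdec hx (le_trans hx (le_of_lt hw)) (le_of_lt hw)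
  have hup_le_u : ∀ x : ℝ, 0 ≤ x → pReg u x + x ≤ u x := by
    intro x hx
    have := hp_le x hx
    linarith
  have huu_le_up : ∀ x : ℝ, 0 ≤ x → uu x ≤ pReg u x + x := by
    intro x hx
    apply le_add_eps
    intro ε hε
    have hx' : x < x + ε := by linarith
    have h1 : uu x ≤ u (x + ε) := by
      rw [huu x hx]; exact csInf_le (hbdd x hx) ⟨x + ε, le_of_lt hx', rfl⟩
    have h2 : u (x + ε) - (x + ε) ≤ pReg u x := hp_ge x (x + ε) hx hx'
    linarith
  -- The level lemma: each intermediate level of `uu` is attained on `Sp`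
  have hlevel : ∀ b : ℝ, 0 ≤ b → ∀ t : ℝ, uu 0 < t → t < uu b →
      ∃ y, (0 ≤ y ∧ pReg u y + y ≤ uu y) ∧ y ∈ Set.Icc 0 b ∧ uu y = t := by
    intro b hb t ht0 htb
    obtain ⟨x, hxmem, hxt⟩ :=
      intermediate_value_Icc hb (huu_cont.mono Set.Icc_subset_Ici_self)
        ⟨le_of_lt ht0, le_of_lt htb⟩
    obtain ⟨hx0, hxb⟩ := hxmem
    have hwit : ∀ ε : ℝ, 0 < ε → ∃ zz, zz ∈ Set.Icc x b ∧ u zz < t + ε := by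
      intro ε hε
      have hε' : 0 < min ε ((uu b - t) / 2) := lt_min hε (by linarith)
      have h1 : sInf (u '' Set.Ici x) < t + min ε ((uu b - t)/2) := by
        rw [← huu x hx0, hxt]; linarith
      obtain ⟨a, ⟨z, hz, rfl⟩, hlt⟩ := exists_lt_of_csInf_lt (hne x) h1
      have hz' : x ≤ z := hz
      have hzb : z ≤ b := by
        by_contra hc
        push_neg at hc
        have h2 : uu b ≤ uu z := huu_mono b z hb (le_of_lt hc)
        have h3 : uu z ≤ u z := huu_le z (le_trans hb (le_of_lt hc))
        have h4 : min ε ((uu b - t)/2) ≤ (uu b - t)/2 := min_le_right _ _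
        linarith
      refine ⟨z, ⟨hz', hzb⟩, ?_⟩
      have h4 : min ε ((uu b - t)/2) ≤ ε := min_le_left _ _
      linarith
    have hseq : ∀ n : ℕ, ∃ zz, zz ∈ Set.Icc x b ∧ u zz < t + 1 / ((n:ℝ) + 1) := by
      intro n; exact hwit (1/((n:ℝ)+1)) (by positivity)
    choose z hzmem hzu using hseq
    obtain ⟨y, hymem, φ, hφ, hty⟩ := isCompact_Icc.tendsto_subseq hzmem
    obtain ⟨hxy, hyb⟩ := hymem
    have hy0 : (0:ℝ) ≤ y := le_trans hx0 hxy
    have hup : pReg u y + y ≤ t := by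
      by_contra hc
      push_neg at hc
      have h1 : t - y < pReg u y := by linarith
      obtain ⟨a, ⟨w, hw, rfl⟩, hgw⟩ := exists_lt_of_lt_csSup (hgne y) h1
      have hw' : y < w := hw
      have hgw' : t - y < u w - w := hgw
      have hηpos : 0 < (u w - w + y - t) / 2 := by linarith
      have hev1 : ∀ᶠ n in atTop, (z ∘ φ) n < w := hty.eventually_lt_const hw'
      have hev2 : ∀ᶠ n in atTop, y - (u w - w + y - t) / 4 < (z ∘ φ) n :=
        hty.eventually_const_lt (by linarith)
      have htend : Tendsto (fun n : ℕ => 1 / ((φ n : ℝ) + 1)) atTop (𝓝 0) :=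
        tendsto_one_div_add_atTop_nhds_zero_nat.comp hφ.tendsto_atTop
      have hev3 : ∀ᶠ n in atTop, 1 / ((φ n : ℝ) + 1) < (u w - w + y - t) / 4 :=
        htend.eventually_lt_const (by linarith)
      obtain ⟨n, h1n, h2n, h3n⟩ := (hev1.and (hev2.and hev3)).exists
      have hz0 : (0:ℝ) ≤ z (φ n) := le_trans hx0 (hzmem (φ n)).1
      have h4 : u w - w ≤ pReg u (z (φ n)) := hp_ge (z (φ n)) w hz0 h1n
      have h5 : pReg u (z (φ n)) + z (φ n) ≤ u (z (φ n)) := hup_le_u _ hz0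
      have h6 : u (z (φ n)) < t + 1 / ((φ n : ℝ) + 1) := hzu (φ n)
      have h7 : (z ∘ φ) n = z (φ n) := rfl
      rw [h7] at h1n h2n
      linarith
    have h4 : t ≤ uu y := by rw [← hxt]; exact huu_mono x y hx0 hxy
    have h5 : uu y ≤ pReg u y + y := huu_le_up y hy0
    exact ⟨y, ⟨hy0, by linarith⟩, ⟨hy0, hyb⟩, by linarith⟩
  -- Countability of the exceptional set
  have hD : {x : ℝ | 0 ≤ x ∧ pReg u x + x < u x}.Countable := by
    set D := {x : ℝ | 0 ≤ x ∧ pReg u x + x < u x} with hDdef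
    have hmap : ∀ y : ↥D, ∃ q : ℚ, pReg u (y:ℝ) < (q:ℝ) ∧ (q:ℝ) < u (y:ℝ) - (y:ℝ) := by
      rintro ⟨y, hy0, hy1⟩
      exact exists_rat_btwn (by simpa using (by linarith : pReg u y < u y - y))
    choose f hf1 hf2 using hmap
    have hinj : Function.Injective f := by
      intro a b hab
      rcases lt_trichotomy (a:ℝ) (b:ℝ) with h | h | h
      · exfalso
        have h1 : u (b:ℝ) - (b:ℝ) ≤ pReg u (a:ℝ) := hp_ge _ _ a.2.1 h
        have h2 := hf1 a
        have h3 := hf2 b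
        rw [hab] at h2
        linarith
      · exact Subtype.ext h
      · exfalso
        have h1 : u (a:ℝ) - (a:ℝ) ≤ pReg u (b:ℝ) := hp_ge _ _ b.2.1 h
        have h2 := hf1 b
        have h3 := hf2 a
        rw [← hab] at h2
        linarith
    have : Countable ↥D := hinj.countable
    exact Set.countable_coe_iff.mp this
  -- the key measure inequality
  have hmain : ∀ b : ℝ, 0 ≤ b →
      uu b - uu 0 ≤ (volume ({y : ℝ | 0 ≤ y ∧ uu y = u y} ∩ Set.Icc 0 b)).toReal := by
    intro b hb
    have hsub1 : Set.Ioo (uu 0) (uu b) ⊆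
        uu '' ({y : ℝ | 0 ≤ y ∧ pReg u y + y ≤ uu y} ∩ Set.Icc 0 b) := by
      rintro t ⟨ht1, ht2⟩
      obtain ⟨y, hySp, hyIcc, hyt⟩ := hlevel b hb t ht1 ht2
      exact ⟨y, ⟨hySp, hyIcc⟩, hyt⟩
    have hlipOn : LipschitzOnWith 1 uu
        ({y : ℝ | 0 ≤ y ∧ pReg u y + y ≤ uu y} ∩ Set.Icc 0 b) := by
      refine huu_lipOn.mono ?_
      intro y hy
      exact hy.1.1
    have himg := hlipOn.hausdorffMeasure_image_le (d := 1) (by norm_num)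
    simp only [ENNReal.coe_one, ENNReal.one_rpow, one_mul] at himg
    rw [MeasureTheory.hausdorffMeasure_real] at himg
    have hsub2 : {y : ℝ | 0 ≤ y ∧ pReg u y + y ≤ uu y} ∩ Set.Icc 0 b ⊆
        ({y : ℝ | 0 ≤ y ∧ uu y = u y} ∩ Set.Icc 0 b) ∪
          {x : ℝ | 0 ≤ x ∧ pReg u x + x < u x} := by
      rintro y ⟨⟨hy0, hysp⟩, hyIcc⟩
      rcases lt_or_eq_of_le (hup_le_u y hy0) with h | h
      · exact Or.inr ⟨hy0, h⟩
      · refine Or.inl ⟨⟨hy0, le_antisymm (huu_le y hy0) ?_⟩, hyIcc⟩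
        rw [← h]
        exact hysp
    have hchain : ENNReal.ofReal (uu b - uu 0) ≤
        volume ({y : ℝ | 0 ≤ y ∧ uu y = u y} ∩ Set.Icc 0 b) := by
      calc ENNReal.ofReal (uu b - uu 0)
          = volume (Set.Ioo (uu 0) (uu b)) := by rw [Real.volume_Ioo]
        _ ≤ volume (uu '' ({y : ℝ | 0 ≤ y ∧ pReg u y + y ≤ uu y} ∩ Set.Icc 0 b)) :=
            measure_mono hsub1
        _ ≤ volume ({y : ℝ | 0 ≤ y ∧ pReg u y + y ≤ uu y} ∩ Set.Icc 0 b) := himg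
        _ ≤ volume (({y : ℝ | 0 ≤ y ∧ uu y = u y} ∩ Set.Icc 0 b) ∪
              {x : ℝ | 0 ≤ x ∧ pReg u x + x < u x}) := measure_mono hsub2
        _ ≤ volume ({y : ℝ | 0 ≤ y ∧ uu y = u y} ∩ Set.Icc 0 b) +
              volume {x : ℝ | 0 ≤ x ∧ pReg u x + x < u x} := measure_union_le _ _
        _ = volume ({y : ℝ | 0 ≤ y ∧ uu y = u y} ∩ Set.Icc 0 b) := by
            rw [hD.measure_zero, add_zero]
    have hfin : volume ({y : ℝ | 0 ≤ y ∧ uu y = u y} ∩ Set.Icc 0 b) ≠ ⊤ := by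
      refine ne_top_of_le_ne_top ?_ (measure_mono Set.inter_subset_right)
      rw [Real.volume_Icc]
      exact ENNReal.ofReal_ne_top
    exact (ENNReal.ofReal_le_iff_le_toReal hfin).mp hchain
  constructor
  -- Measurability
  · have hU : Antitone (fun x : ℝ => if 0 ≤ x then u x - x else u 0) := by
      intro x y hxy
      dsimp only
      by_cases hx : (0:ℝ) ≤ x
      · have hy : (0:ℝ) ≤ y := le_trans hx hxy
        rw [if_pos hx, if_pos hy]
        exact hdec hx hy hxy
      · rw [if_neg hx]
        by_cases hy : (0:ℝ) ≤ y
        · rw [if_pos hy]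
          have h0 : u y - y ≤ u 0 - 0 := hdec (le_refl (0:ℝ)) hy hy
          linarith
        · rw [if_neg hy]
    have hV : Monotone (fun x : ℝ => if 0 ≤ x then uu x else uu 0) := by
      intro x y hxy
      dsimp only
      by_cases hx : (0:ℝ) ≤ x
      · have hy : (0:ℝ) ≤ y := le_trans hx hxy
        rw [if_pos hx, if_pos hy]
        exact huu_mono x y hx hxy
      · rw [if_neg hx]
        by_cases hy : (0:ℝ) ≤ y
        · rw [if_pos hy]
          exact huu_mono 0 y (le_refl 0) hy
        · rw [if_neg hy]
    have hmU : Measurable (fun x : ℝ => if 0 ≤ x then u x - x else u 0) := hU.measurable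
    have hmV : Measurable (fun x : ℝ => if 0 ≤ x then uu x else uu 0) := hV.measurable
    have hset : {x : ℝ | 0 ≤ x ∧ uu x = u x} =
        Set.Ici (0:ℝ) ∩ (fun x : ℝ => (if 0 ≤ x then uu x else uu 0) -
          ((if 0 ≤ x then u x - x else u 0) + x)) ⁻¹' {0} := by
      ext x
      simp only [Set.mem_inter_iff, Set.mem_Ici, Set.mem_setOf_eq, Set.mem_preimage,
        Set.mem_singleton_iff]
      constructor
      · rintro ⟨hx, he⟩
        rw [if_pos hx, if_pos hx]
        refine ⟨hx, ?_⟩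
        rw [he]; ring
      · rintro ⟨hx, he⟩
        rw [if_pos hx, if_pos hx] at he
        exact ⟨hx, by linarith⟩
    rw [hset]
    exact measurableSet_Ici.inter
      ((hmV.sub (hmU.add measurable_id)) (measurableSet_singleton 0))
  -- The liminf inequality
  · rw [Filter.liminf_eq, Filter.liminf_eq]
    have h0A : (0:ℝ) ∈ {a : ℝ | ∀ᶠ x in atTop, a ≤ u x / x} := by
      filter_upwards [eventually_ge_atTop (0:ℝ)] with x hx
      exact div_nonneg (hpos x hx) hx
    have hd_le_one : ∀ᶠ x : ℝ in atTop,
        (volume ({y : ℝ | 0 ≤ y ∧ uu y = u y} ∩ Set.Icc 0 x)).toReal / x ≤ 1 := by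
      filter_upwards [eventually_ge_atTop (1:ℝ)] with x hx
      have hx0 : (0:ℝ) < x := by linarith
      have h1 : volume ({y : ℝ | 0 ≤ y ∧ uu y = u y} ∩ Set.Icc 0 x) ≤
          ENNReal.ofReal x := by
        refine le_trans (measure_mono Set.inter_subset_right) ?_
        rw [Real.volume_Icc]
        simp
      have h2 : (volume ({y : ℝ | 0 ≤ y ∧ uu y = u y} ∩ Set.Icc 0 x)).toReal ≤ x := by
        refine le_trans (ENNReal.toReal_mono ENNReal.ofReal_ne_top h1) ?_
        rw [ENNReal.toReal_ofReal (by linarith)]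
      rw [div_le_one hx0]
      exact h2
    have hBbdd : BddAbove {a : ℝ | ∀ᶠ x in atTop,
        a ≤ (volume ({y : ℝ | 0 ≤ y ∧ uu y = u y} ∩ Set.Icc 0 x)).toReal / x} := by
      refine ⟨1, ?_⟩
      intro a ha
      obtain ⟨x, hx1, hx2⟩ := (ha.and hd_le_one).exists
      linarith
    refine csSup_le ⟨0, h0A⟩ ?_
    intro a ha
    apply le_add_eps
    intro ε hε
    have hmem : a - ε ∈ {a : ℝ | ∀ᶠ x in atTop,
        a ≤ (volume ({y : ℝ | 0 ≤ y ∧ uu y = u y} ∩ Set.Icc 0 x)).toReal / x} := by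
      rcases le_or_gt a ε with hcase | hcase
      · filter_upwards [eventually_ge_atTop (1:ℝ)] with x hx
        have hx0 : (0:ℝ) < x := by linarith
        have : (0:ℝ) ≤ (volume ({y : ℝ | 0 ≤ y ∧ uu y = u y} ∩ Set.Icc 0 x)).toReal / x :=
          div_nonneg ENNReal.toReal_nonneg (le_of_lt hx0)
        linarith
      · have hapos : (0:ℝ) < a := lt_trans hε hcase
        obtain ⟨X₀, hX₀⟩ := (eventually_atTop).mp ha
        filter_upwards [eventually_ge_atTop (max (max X₀ 1) (uu 0 / ε))] with x hx
        have hxX : X₀ ≤ x := le_trans (le_trans (le_max_left _ _) (le_max_left _ _)) hx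
        have hx1 : (1:ℝ) ≤ x := le_trans (le_trans (le_max_right _ _) (le_max_left _ _)) hx
        have hxu : uu 0 / ε ≤ x := le_trans (le_max_right _ _) hx
        have hxpos : (0:ℝ) < x := by linarith
        have hx0 : (0:ℝ) ≤ x := le_of_lt hxpos
        have huux : a * x ≤ uu x := by
          rw [huu x hx0]
          refine le_csInf (hne x) ?_
          rintro bb ⟨y, hy, rfl⟩
          have hyx : x ≤ y := hy
          have hypos : (0:ℝ) < y := lt_of_lt_of_le hxpos hyx
          have h1 : a ≤ u y / y := hX₀ y (le_trans hxX hyx)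
          have h2 : a * y ≤ u y := (le_div_iff₀ hypos).mp h1
          have h3 : a * x ≤ a * y := mul_le_mul_of_nonneg_left hyx (le_of_lt hapos)
          linarith
        have hk := hmain x hx0
        have h3 : uu 0 ≤ ε * x := by
          have := (div_le_iff₀ hε).mp hxu
          linarith
        rw [le_div_iff₀ hxpos]
        linarith
    have := le_csSup hBbdd hmem
    linarith
end

section
/- Let v : ℝ≥0 → ℝ≥0 be a positive decreasing function with ∫₀^∞ v(x) dx = ∞. Then for every Borel set B ⊂ ℝ≥0 with positive lower density ρ₋(B) > 0, one has ∫_B v(x) dx = ∞. -/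
open Set Topology Filter MeasureTheory ENNReal

/-- If `v` is positive and decreasing on `[0,∞)` with divergent integral, then its
integral over any Borel set of positive lower density also diverges. -/
theorem stmt_2 (v : ℝ → ℝ) (hpos : ∀ x ∈ Set.Ici (0 : ℝ), 0 < v x)
    (hdec : AntitoneOn v (Set.Ici 0))
    (hdiv : (∫⁻ x in Set.Ioi (0 : ℝ), ENNReal.ofReal (v x)) = ⊤)
    (B : Set ℝ) (hB : MeasurableSet B) (hB0 : B ⊆ Set.Ici 0)
    (hρ : 0 < Filter.liminf
      (fun x : ℝ => (MeasureTheory.volume (B ∩ Set.Icc 0 x)).toReal / x) Filter.atTop) :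
    (∫⁻ x in B, ENNReal.ofReal (v x)) = ⊤ := by
  set μ : Measure ℝ := volume.withDensity (fun x => ENNReal.ofReal (v x)) with hμdef
  have hμapp : ∀ s : Set ℝ, MeasurableSet s → μ s = ∫⁻ x in s, ENNReal.ofReal (v x) :=
    fun s hs => withDensity_apply _ hs
  rw [← hμapp B hB]
  by_contra hfin
  -- extract a positive lower density bound
  set f : ℝ → ℝ := fun x => (volume (B ∩ Set.Icc 0 x)).toReal / x with hfdef
  set L := Filter.liminf f Filter.atTop with hLdef
  set a : ℝ := min (L / 2) (1 / 2) with hadef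
  have ha0 : 0 < a := lt_min (by linarith) one_half_pos
  have ha2 : a ≤ 1 / 2 := min_le_right _ _
  have haL : a < L := lt_of_le_of_lt (min_le_left _ _) (by linarith)
  have hbdd : Filter.IsBoundedUnder (· ≥ ·) Filter.atTop f := by
    refine ⟨0, ?_⟩
    rw [eventually_map]
    filter_upwards [eventually_ge_atTop (1 : ℝ)] with x hx
    have hx0 : (0:ℝ) < x := by linarith
    exact div_nonneg ENNReal.toReal_nonneg hx0.le
  have hev := Filter.eventually_lt_of_lt_liminf haL hbdd
  obtain ⟨x₀', hx₀'⟩ := Filter.eventually_atTop.1 hev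
  set x₀ : ℝ := max x₀' 1 with hx₀def
  have hx₀pos : (0:ℝ) < x₀ := lt_of_lt_of_le one_pos (le_max_right _ _)
  have hdens : ∀ y : ℝ, x₀ ≤ y → a * y < (volume (B ∩ Set.Icc 0 y)).toReal := by
    intro y hy
    have hy0 : (0:ℝ) < y := lt_of_lt_of_le hx₀pos hy
    have := hx₀' y (le_trans (le_max_left _ _) hy)
    calc a * y < f y * y := by
          exact mul_lt_mul_of_pos_right this hy0
      _ = (volume (B ∩ Set.Icc 0 y)).toReal := by
          exact div_mul_cancel₀ _ hy0.ne'
  -- the ratio K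
  set K : ℝ := 2 / a with hKdef
  have hK4 : (4:ℝ) ≤ K := by
    rw [hKdef]
    rw [le_div_iff₀ ha0]
    linarith
  have hK1 : (1:ℝ) < K := by linarith
  have haK : a * K = 2 := by
    rw [hKdef]; field_simp
  set C : ℝ≥0∞ := ENNReal.ofReal (K * (K - 1)) with hCdef
  have hCtop : C ≠ ⊤ := ENNReal.ofReal_ne_top
  -- key block estimate
  have key : ∀ x : ℝ, x₀ ≤ x →
      μ (Set.Ioc (K * x) (K * (K * x))) ≤ C * μ (B ∩ Set.Ioc x (K * x)) := by
    intro x hx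
    have hxpos : (0:ℝ) < x := lt_of_lt_of_le hx₀pos hx
    have hxKx : x ≤ K * x := by nlinarith
    have hKx₀ : x₀ ≤ K * x := le_trans hx hxKx
    have hKxpos : (0:ℝ) < K * x := lt_of_lt_of_le hxpos hxKx
    -- measure of B in the block is at least x
    have hd := hdens (K * x) hKx₀
    have haKx : a * (K * x) = 2 * x := by rw [← mul_assoc, haK]
    have hd2 : 2 * x ≤ (volume (B ∩ Set.Icc 0 (K * x))).toReal := by linarith
    have hfinvol : volume (B ∩ Set.Icc 0 (K * x)) ≠ ⊤ := by
      refine ne_top_of_le_ne_top ?_ (measure_mono inter_subset_right)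
      simp [Real.volume_Icc]
    have hsub : B ∩ Set.Icc 0 (K * x) ⊆ (B ∩ Set.Ioc x (K * x)) ∪ Set.Icc 0 x := by
      rintro y ⟨hyB, hy0, hyK⟩
      rcases le_or_gt y x with h | h
      · exact Or.inr ⟨hy0, h⟩
      · exact Or.inl ⟨hyB, h, hyK⟩
    have hlow : ENNReal.ofReal (2 * x) ≤ volume (B ∩ Set.Ioc x (K * x)) + ENNReal.ofReal x := by
      calc ENNReal.ofReal (2 * x) ≤ volume (B ∩ Set.Icc 0 (K * x)) := by
            rw [← ENNReal.ofReal_toReal hfinvol]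
            exact ENNReal.ofReal_le_ofReal hd2
        _ ≤ volume ((B ∩ Set.Ioc x (K * x)) ∪ Set.Icc 0 x) := measure_mono hsub
        _ ≤ volume (B ∩ Set.Ioc x (K * x)) + volume (Set.Icc 0 x) := measure_union_le _ _
        _ = volume (B ∩ Set.Ioc x (K * x)) + ENNReal.ofReal x := by
            rw [Real.volume_Icc]; ring_nf
    have hvol : ENNReal.ofReal x ≤ volume (B ∩ Set.Ioc x (K * x)) := by
      have h1 : ENNReal.ofReal (2 * x) - ENNReal.ofReal x ≤ volume (B ∩ Set.Ioc x (K * x)) :=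
        tsub_le_iff_right.mpr hlow
      rwa [← ENNReal.ofReal_sub _ hxpos.le, show 2 * x - x = x by ring] at h1
    -- lower bound for μ on B-block
    have hmeasS : MeasurableSet (B ∩ Set.Ioc x (K * x)) := hB.inter measurableSet_Ioc
    have hlower : ENNReal.ofReal x * ENNReal.ofReal (v (K * x)) ≤ μ (B ∩ Set.Ioc x (K * x)) := by
      rw [hμapp _ hmeasS]
      calc ENNReal.ofReal x * ENNReal.ofReal (v (K * x))
          ≤ volume (B ∩ Set.Ioc x (K * x)) * ENNReal.ofReal (v (K * x)) :=
            mul_le_mul_left hvol _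
        _ = ∫⁻ _ in B ∩ Set.Ioc x (K * x), ENNReal.ofReal (v (K * x)) := by
            rw [setLIntegral_const]; ring
        _ ≤ ∫⁻ y in B ∩ Set.Ioc x (K * x), ENNReal.ofReal (v y) := by
            refine setLIntegral_mono' hmeasS fun y hy => ?_
            have hy0 : (0:ℝ) ≤ y := le_trans hxpos.le hy.2.1.le
            exact ENNReal.ofReal_le_ofReal (hdec hy0 hKxpos.le hy.2.2)
    -- upper bound for μ on the next block
    have hupper : μ (Set.Ioc (K * x) (K * (K * x)))
        ≤ ENNReal.ofReal (K * (K * x) - K * x) * ENNReal.ofReal (v (K * x)) := by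
      rw [hμapp _ measurableSet_Ioc]
      calc ∫⁻ y in Set.Ioc (K * x) (K * (K * x)), ENNReal.ofReal (v y)
          ≤ ∫⁻ _ in Set.Ioc (K * x) (K * (K * x)), ENNReal.ofReal (v (K * x)) := by
            refine setLIntegral_mono' measurableSet_Ioc fun y hy => ?_
            have hy0 : (0:ℝ) ≤ y := le_trans hKxpos.le hy.1.le
            exact ENNReal.ofReal_le_ofReal (hdec hKxpos.le hy0 hy.1.le)
        _ = ENNReal.ofReal (v (K * x)) * volume (Set.Ioc (K * x) (K * (K * x))) :=
            setLIntegral_const _ _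
        _ = ENNReal.ofReal (K * (K * x) - K * x) * ENNReal.ofReal (v (K * x)) := by
            rw [Real.volume_Ioc]; ring
    calc μ (Set.Ioc (K * x) (K * (K * x)))
        ≤ ENNReal.ofReal (K * (K * x) - K * x) * ENNReal.ofReal (v (K * x)) := hupper
      _ = C * (ENNReal.ofReal x * ENNReal.ofReal (v (K * x))) := by
          have hx' : ENNReal.ofReal (K * (K * x) - K * x) = C * ENNReal.ofReal x := by
            rw [hCdef, ← ENNReal.ofReal_mul (by nlinarith : (0:ℝ) ≤ K * (K - 1))]
            congr 1; ring
          rw [hx', mul_assoc]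
      _ ≤ C * μ (B ∩ Set.Ioc x (K * x)) := mul_le_mul_right hlower _
  -- induction: μ (Ioc (K x₀) (x₀ K^(N+1))) ≤ C μ (B ∩ Ioc x₀ (x₀ K^N))
  have hKpow : ∀ N : ℕ, x₀ ≤ x₀ * K ^ N := by
    intro N
    nlinarith [one_le_pow₀ (le_of_lt hK1) (n := N), hx₀pos]
  have main : ∀ N : ℕ, μ (Set.Ioc (K * x₀) (x₀ * K ^ (N + 1)))
      ≤ C * μ (B ∩ Set.Ioc x₀ (x₀ * K ^ N)) := by
    intro N
    induction N with
    | zero =>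
      have : Set.Ioc (K * x₀) (x₀ * K ^ 1) = (∅ : Set ℝ) := by
        rw [Set.Ioc_eq_empty_iff]
        intro h
        simp only [pow_one] at h
        linarith [h]
      rw [this]
      simp
    | succ N ih =>
      show μ (Set.Ioc (K * x₀) (x₀ * K ^ (N + 2))) ≤ C * μ (B ∩ Set.Ioc x₀ (x₀ * K ^ (N + 1)))
      have hx : x₀ ≤ x₀ * K ^ N := hKpow N
      have e1 : x₀ * K ^ (N + 1) = K * (x₀ * K ^ N) := by ring
      have e2 : x₀ * K ^ (N + 2) = K * (K * (x₀ * K ^ N)) := by ring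
      have hk := key (x₀ * K ^ N) hx
      rw [← e2, ← e1] at hk
      have hsplit : μ (Set.Ioc (K * x₀) (x₀ * K ^ (N + 2)))
          ≤ μ (Set.Ioc (K * x₀) (x₀ * K ^ (N + 1))) + μ (Set.Ioc (x₀ * K ^ (N + 1)) (x₀ * K ^ (N + 2))) := by
        refine le_trans (measure_mono ?_) (measure_union_le _ _)
        intro y hy
        rcases le_or_gt y (x₀ * K ^ (N + 1)) with h | h
        · exact Or.inl ⟨hy.1, h⟩
        · exact Or.inr ⟨h, hy.2⟩
      have hdisj : Disjoint (B ∩ Set.Ioc x₀ (x₀ * K ^ N)) (B ∩ Set.Ioc (x₀ * K ^ N) (x₀ * K ^ (N + 1))) :=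
        (Set.Ioc_disjoint_Ioc_of_le le_rfl).mono inter_subset_right inter_subset_right
      have hadd : μ (B ∩ Set.Ioc x₀ (x₀ * K ^ N)) + μ (B ∩ Set.Ioc (x₀ * K ^ N) (x₀ * K ^ (N + 1)))
          ≤ μ (B ∩ Set.Ioc x₀ (x₀ * K ^ (N + 1))) := by
        rw [← measure_union hdisj (hB.inter measurableSet_Ioc)]
        refine measure_mono ?_
        rintro y (⟨hyB, h1, h2⟩ | ⟨hyB, h1, h2⟩)
        · refine ⟨hyB, h1, le_trans h2 ?_⟩
          nlinarith [hKpow N, pow_nonneg (le_trans zero_le_one hK1.le) N]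
        · exact ⟨hyB, lt_of_le_of_lt hx h1, h2⟩
      calc μ (Set.Ioc (K * x₀) (x₀ * K ^ (N + 2)))
          ≤ μ (Set.Ioc (K * x₀) (x₀ * K ^ (N + 1))) + μ (Set.Ioc (x₀ * K ^ (N + 1)) (x₀ * K ^ (N + 2))) := hsplit
        _ ≤ C * μ (B ∩ Set.Ioc x₀ (x₀ * K ^ N)) + C * μ (B ∩ Set.Ioc (x₀ * K ^ N) (x₀ * K ^ (N + 1))) :=
            add_le_add ih hk
        _ = C * (μ (B ∩ Set.Ioc x₀ (x₀ * K ^ N)) + μ (B ∩ Set.Ioc (x₀ * K ^ N) (x₀ * K ^ (N + 1)))) := by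
            ring
        _ ≤ C * μ (B ∩ Set.Ioc x₀ (x₀ * K ^ (N + 1))) := mul_le_mul_right hadd _
  -- μ (Ioi (K x₀)) = ⊤
  have hKx₀pos : (0:ℝ) < K * x₀ := by nlinarith
  have hfin0 : μ (Set.Ioc 0 (K * x₀)) ≠ ⊤ := by
    rw [hμapp _ measurableSet_Ioc]
    have hbound : ∫⁻ y in Set.Ioc 0 (K * x₀), ENNReal.ofReal (v y)
        ≤ ∫⁻ _ in Set.Ioc 0 (K * x₀), ENNReal.ofReal (v 0) := by
      refine setLIntegral_mono' measurableSet_Ioc fun y hy => ?_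
      exact ENNReal.ofReal_le_ofReal (hdec (Set.mem_Ici.2 le_rfl) hy.1.le hy.1.le)
    refine ne_top_of_le_ne_top ?_ hbound
    rw [setLIntegral_const, Real.volume_Ioc]
    exact ENNReal.mul_ne_top ENNReal.ofReal_ne_top ENNReal.ofReal_ne_top
  have htop : μ (Set.Ioi (K * x₀)) = ⊤ := by
    by_contra h
    have hsplit : μ (Set.Ioi (0:ℝ)) ≤ μ (Set.Ioc 0 (K * x₀)) + μ (Set.Ioi (K * x₀)) := by
      refine le_trans (measure_mono ?_) (measure_union_le _ _)
      intro y hy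
      rcases le_or_gt y (K * x₀) with h' | h'
      · exact Or.inl ⟨hy, h'⟩
      · exact Or.inr h'
    rw [hμapp _ measurableSet_Ioi, hdiv] at hsplit
    exact (ENNReal.add_lt_top.mpr ⟨lt_top_iff_ne_top.2 hfin0, lt_top_iff_ne_top.2 h⟩).ne
      (top_le_iff.1 hsplit)
  -- monotone union
  have hunion : Set.Ioi (K * x₀) = ⋃ N : ℕ, Set.Ioc (K * x₀) (x₀ * K ^ (N + 1)) := by
    ext y
    simp only [Set.mem_Ioi, Set.mem_iUnion, Set.mem_Ioc]
    constructor
    · intro hy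
      obtain ⟨n, hn⟩ := pow_unbounded_of_one_lt (y / x₀) hK1
      refine ⟨n, hy, ?_⟩
      have h1 : y < x₀ * K ^ n := by
        rw [div_lt_iff₀ hx₀pos] at hn
        linarith [hn]
      have h2 : x₀ * K ^ n ≤ x₀ * K ^ (n + 1) :=
        mul_le_mul_of_nonneg_left (pow_le_pow_right₀ hK1.le (Nat.le_succ n)) hx₀pos.le
      linarith
    · rintro ⟨N, h1, _⟩
      exact h1
  have hdir : Directed (· ⊆ ·) (fun N : ℕ => Set.Ioc (K * x₀) (x₀ * K ^ (N + 1))) := by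
    refine (Monotone.directed_le ?_)
    intro m n hmn
    exact Set.Ioc_subset_Ioc_right
      (mul_le_mul_of_nonneg_left (pow_le_pow_right₀ hK1.le (Nat.add_le_add_right hmn 1)) hx₀pos.le)
  have hsup : μ (Set.Ioi (K * x₀)) = ⨆ N : ℕ, μ (Set.Ioc (K * x₀) (x₀ * K ^ (N + 1))) := by
    rw [hunion]
    exact hdir.measure_iUnion
  have hbound : μ (Set.Ioi (K * x₀)) ≤ C * μ B := by
    rw [hsup]
    refine iSup_le fun N => ?_
    exact le_trans (main N) (mul_le_mul_right (measure_mono inter_subset_left) _)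
  rw [htop] at hbound
  have : C * μ B ≠ ⊤ := ENNReal.mul_ne_top hCtop hfin
  exact this (top_le_iff.1 hbound)
end

section
/- Let γ > 0 and let w : (0,∞) → (0,∞) be an increasing differentiable function such that t ↦ w(t^γ) is concave (equivalently, t ↦ w'(t) t^{1−1/γ} is decreasing). Then for all t, s > 0: w(t+s)² − w(t)² ≤ 2γ w(t+s) w'(t) t ((1 + s/t)^{1/γ} − 1). -/
open Set Topology

/-- If `w : (0,∞) → (0,∞)` is increasing, differentiable, and `u ↦ w'(u) u^{1-1/γ}`
is decreasing, then `w(t+s)² − w(t)² ≤ 2γ w(t+s) w'(t) t ((1+s/t)^{1/γ} − 1)`. -/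
theorem stmt_4 (γ : ℝ) (hγ : 0 < γ) (w w' : ℝ → ℝ)
    (hpos : ∀ t ∈ Set.Ioi (0 : ℝ), 0 < w t)
    (hmono : MonotoneOn w (Set.Ioi 0))
    (hderiv : ∀ t ∈ Set.Ioi (0 : ℝ), HasDerivAt w (w' t) t)
    (hconc : AntitoneOn (fun u => w' u * u ^ (1 - 1 / γ)) (Set.Ioi 0))
    (t s : ℝ) (ht : 0 < t) (hs : 0 < s) :
    w (t + s) ^ 2 - w t ^ 2 ≤
      2 * γ * w (t + s) * w' t * t * ((1 + s / t) ^ (1 / γ) - 1) := by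
  have hts : (0:ℝ) < t + s := by linarith
  set a : ℝ := w' t * t ^ (1 - 1 / γ) with ha
  set F : ℝ → ℝ := fun u => γ * a * u ^ (1 / γ) - w u with hF
  -- each u in Icc t (t+s) is positive
  have hsub : Set.Icc t (t + s) ⊆ Set.Ioi (0:ℝ) := by
    intro u hu; exact lt_of_lt_of_le ht hu.1
  have hFderiv : ∀ u ∈ Set.Ioi (0:ℝ),
      HasDerivAt F (a * u ^ (1 / γ - 1) - w' u) u := by
    intro u hu
    have hu0 : (0:ℝ) < u := hu
    have h1 : HasDerivAt (fun x : ℝ => x ^ (1 / γ)) (1 / γ * u ^ (1 / γ - 1)) u :=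
      Real.hasDerivAt_rpow_const (Or.inl (ne_of_gt hu0))
    have h2 := (h1.const_mul (γ * a)).sub (hderiv u hu)
    refine h2.congr_deriv ?_
    have hγ' : γ * (1 / γ) = 1 := mul_one_div_cancel hγ.ne'
    linear_combination a * u ^ (1 / γ - 1) * hγ'
  have hmonoF : MonotoneOn F (Set.Icc t (t + s)) := by
    apply monotoneOn_of_deriv_nonneg (convex_Icc _ _)
    · intro u hu
      exact ((hFderiv u (hsub hu)).continuousAt).continuousWithinAt
    · intro u hu
      rw [interior_Icc] at hu
      exact (hFderiv u (hsub (Set.Ioo_subset_Icc_self hu))).differentiableAt.differentiableWithinAt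
    · intro u hu
      rw [interior_Icc] at hu
      have hu0 : (0:ℝ) < u := lt_trans ht hu.1
      rw [(hFderiv u hu0).deriv]
      have hle : w' u * u ^ (1 - 1 / γ) ≤ a := by
        exact hconc ht hu0 (le_of_lt hu.1)
      have hup : (0:ℝ) < u ^ (1 / γ - 1) := Real.rpow_pos_of_pos hu0 _
      have hid : u ^ (1 - 1 / γ) * u ^ (1 / γ - 1) = 1 := by
        rw [← Real.rpow_add hu0]; norm_num
      have : w' u = w' u * u ^ (1 - 1 / γ) * u ^ (1 / γ - 1) := by
        rw [mul_assoc, hid, mul_one]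
      rw [this]
      have := mul_le_mul_of_nonneg_right hle (le_of_lt hup)
      linarith
  have hkey : w (t + s) - w t ≤ γ * a * ((t + s) ^ (1 / γ) - t ^ (1 / γ)) := by
    have := hmonoF (Set.left_mem_Icc.2 (by linarith))
      (Set.right_mem_Icc.2 (by linarith)) (by linarith)
    simp only [hF] at this
    linarith [this]
  -- rewrite the rpow expressions
  have hfact : a * ((t + s) ^ (1 / γ) - t ^ (1 / γ))
      = w' t * t * ((1 + s / t) ^ (1 / γ) - 1) := by
    have h1 : t + s = t * (1 + s / t) := by field_simp
    have h2 : (t + s) ^ (1 / γ) = t ^ (1 / γ) * (1 + s / t) ^ (1 / γ) := by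
      rw [h1, Real.mul_rpow (le_of_lt ht) (by positivity)]
    have h3 : t ^ (1 - 1 / γ) * t ^ (1 / γ) = t := by
      rw [← Real.rpow_add ht]; norm_num
    have h4 : w' t * t ^ (1 - 1/γ) * (t ^ (1/γ) * (1 + s/t) ^ (1/γ) - t ^ (1/γ))
        = w' t * (t ^ (1 - 1/γ) * t ^ (1/γ)) * ((1 + s/t) ^ (1/γ) - 1) := by ring
    rw [h2, ha, h4, h3]
  have hkey2 : w (t + s) - w t ≤ γ * (w' t * t * ((1 + s / t) ^ (1 / γ) - 1)) := by
    calc w (t + s) - w t ≤ γ * a * ((t + s) ^ (1 / γ) - t ^ (1 / γ)) := hkey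
      _ = γ * (w' t * t * ((1 + s / t) ^ (1 / γ) - 1)) := by rw [mul_assoc, hfact]
  have hwle : w t ≤ w (t + s) := hmono ht hts (by linarith)
  have hwpos : 0 < w (t + s) := hpos _ hts
  nlinarith [hwpos, hwle, mul_le_mul_of_nonneg_left hkey2 (le_of_lt hwpos)]
end

section
/- Let γ > 0 and let w : (0,∞) → (0,∞) be an increasing differentiable function such that t ↦ w'(t) t^{1−1/γ} is decreasing and t ↦ w(t)/t^{1/γ} is decreasing. Then for all t, s > 0: log w(t+s) − log w(t) ≤ t w'(t) (1 + s/t)^{1/γ} log(1 + s/t) / w(t+s). -/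
open Set Topology

/-- If `w : (0,∞) → (0,∞)` is increasing, differentiable, `u ↦ w'(u) u^{1-1/γ}`
decreasing and `u ↦ w(u)/u^{1/γ}` decreasing, then
`log w(t+s) − log w(t) ≤ t w'(t) (1+s/t)^{1/γ} log(1+s/t) / w(t+s)`. -/
theorem stmt_5 (γ : ℝ) (hγ : 0 < γ) (w w' : ℝ → ℝ)
    (hpos : ∀ t ∈ Set.Ioi (0 : ℝ), 0 < w t)
    (hmono : MonotoneOn w (Set.Ioi 0))
    (hderiv : ∀ t ∈ Set.Ioi (0 : ℝ), HasDerivAt w (w' t) t)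
    (hdec1 : AntitoneOn (fun u => w' u * u ^ (1 - 1 / γ)) (Set.Ioi 0))
    (hdec2 : AntitoneOn (fun u => w u / u ^ (1 / γ)) (Set.Ioi 0))
    (t s : ℝ) (ht : 0 < t) (hs : 0 < s) :
    Real.log (w (t + s)) - Real.log (w t) ≤
      t * w' t * (1 + s / t) ^ (1 / γ) * Real.log (1 + s / t) / w (t + s) := by
  have htpos : (0:ℝ) < t + s := by linarith
  have hwts : 0 < w (t + s) := hpos _ htpos
  have hwt : 0 < w t := hpos _ ht
  -- nonnegativity of w' t
  have hw't : 0 ≤ w' t := by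
    have h1 : Filter.Tendsto (slope w t) (𝓝[>] t) (𝓝 (w' t)) :=
      (hasDerivAt_iff_tendsto_slope.mp (hderiv t ht)).mono_left
        (nhdsWithin_mono _ fun x hx => ne_of_gt hx)
    refine ge_of_tendsto h1 ?_
    filter_upwards [self_mem_nhdsWithin] with u hu
    have hu' : t < u := hu
    have hwle : w t ≤ w u := hmono ht (lt_trans ht hu') hu'.le
    rw [slope_def_field]
    exact div_nonneg (by linarith) (by linarith)
  set C : ℝ := w' t * t ^ (1 - 1 / γ) * (t + s) ^ (1 / γ) / w (t + s) with hC
  -- the auxiliary function and its derivative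
  have hf : ∀ u ∈ Set.Ioi (0:ℝ), HasDerivAt (fun u => Real.log (w u) - C * Real.log u)
      (w' u / w u - C / u) u := by
    intro u hu
    have h1 : HasDerivAt (fun u => Real.log (w u)) (w' u / w u) u :=
      (hderiv u hu).log (hpos u hu).ne'
    have h2 : HasDerivAt (fun u => C * Real.log u) (C * u⁻¹) u :=
      (Real.hasDerivAt_log (ne_of_gt hu)).const_mul C
    have := h1.sub h2
    rw [div_eq_mul_inv, div_eq_mul_inv]
    exact this
  -- the auxiliary function is antitone on [t, t+s]
  have hkey : AntitoneOn (fun u => Real.log (w u) - C * Real.log u) (Set.Icc t (t + s)) := by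
    apply antitoneOn_of_deriv_nonpos (convex_Icc _ _)
    · intro u hu
      have hu0 : (0:ℝ) < u := lt_of_lt_of_le ht hu.1
      exact ((hf u hu0).continuousAt).continuousWithinAt
    · rw [interior_Icc]
      intro u hu
      have hu0 : (0:ℝ) < u := lt_trans ht hu.1
      exact (hf u hu0).differentiableAt.differentiableWithinAt
    · rw [interior_Icc]
      intro u hu
      have hu0 : (0:ℝ) < u := lt_trans ht hu.1
      rw [(hf u hu0).deriv]
      have hut : t ≤ u := hu.1.le
      have huts : u ≤ t + s := hu.2.le
      have hwu : 0 < w u := hpos u hu0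
      have hup : (0:ℝ) < u ^ (1 - 1 / γ) := Real.rpow_pos_of_pos hu0 _
      have hugp : (0:ℝ) < u ^ (1 / γ) := Real.rpow_pos_of_pos hu0 _
      have htsp : (0:ℝ) < (t + s) ^ (1 / γ) := Real.rpow_pos_of_pos htpos _
      -- bound on w' u
      have hb1 : w' u * u ^ (1 - 1 / γ) ≤ w' t * t ^ (1 - 1 / γ) := hdec1 ht hu0 hut
      have hb1' : w' u ≤ w' t * t ^ (1 - 1 / γ) / u ^ (1 - 1 / γ) := by
        rw [le_div_iff₀ hup]; exact hb1
      -- lower bound on w u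
      have hb2 : w (t + s) / (t + s) ^ (1 / γ) ≤ w u / u ^ (1 / γ) := hdec2 hu0 htpos huts
      have hb2' : w (t + s) * u ^ (1 / γ) / (t + s) ^ (1 / γ) ≤ w u := by
        rw [le_div_iff₀ hugp] at hb2
        calc w (t + s) * u ^ (1 / γ) / (t + s) ^ (1 / γ)
            = w (t + s) / (t + s) ^ (1 / γ) * u ^ (1 / γ) := by ring
        _ ≤ w u := hb2
      have hlbpos : 0 < w (t + s) * u ^ (1 / γ) / (t + s) ^ (1 / γ) := by positivity
      have hBnn : 0 ≤ w' t * t ^ (1 - 1 / γ) / u ^ (1 - 1 / γ) := by positivity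
      have hmul : u ^ (1 - 1 / γ) * u ^ (1 / γ) = u := by
        rw [← Real.rpow_add hu0]
        norm_num
      have heqC : (w' t * t ^ (1 - 1 / γ) / u ^ (1 - 1 / γ)) /
          (w (t + s) * u ^ (1 / γ) / (t + s) ^ (1 / γ)) = C / u := by
        rw [hC]
        rw [div_div_div_comm, div_div_eq_mul_div, div_div]
        rw [div_eq_div_iff (by positivity) (by positivity)]
        have hmul' : u ^ ((γ - 1) / γ) * u ^ (1 / γ) = u := by
          rw [← Real.rpow_add hu0]
          have h9 : (γ - 1) / γ + 1 / γ = 1 := by field_simp; ring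
          rw [h9, Real.rpow_one]
        field_simp
        linear_combination (-(w' t)) * hmul'
      have step1 : w' u / w u ≤ (w' t * t ^ (1 - 1 / γ) / u ^ (1 - 1 / γ)) / w u := by
        gcongr
      have step2 : (w' t * t ^ (1 - 1 / γ) / u ^ (1 - 1 / γ)) / w u ≤
          (w' t * t ^ (1 - 1 / γ) / u ^ (1 - 1 / γ)) /
          (w (t + s) * u ^ (1 / γ) / (t + s) ^ (1 / γ)) := by
        gcongr
      have : w' u / w u ≤ C / u := by
        calc w' u / w u ≤ _ := step1
        _ ≤ _ := step2
        _ = C / u := heqC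
      linarith
  -- apply antitonicity
  have hmem1 : t ∈ Set.Icc t (t + s) := ⟨le_refl _, by linarith⟩
  have hmem2 : t + s ∈ Set.Icc t (t + s) := ⟨by linarith, le_refl _⟩
  have hineq := hkey hmem1 hmem2 (by linarith)
  simp only at hineq
  have hmain : Real.log (w (t + s)) - Real.log (w t) ≤
      C * (Real.log (t + s) - Real.log t) := by linarith [hineq]
  have hlog : Real.log (t + s) - Real.log t = Real.log (1 + s / t) := by
    rw [← Real.log_div htpos.ne' ht.ne']
    congr 1
    field_simp
  have hpow : t ^ (1 - 1 / γ) * (t + s) ^ (1 / γ) = t * (1 + s / t) ^ (1 / γ) := by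
    have h1 : (1 + s / t) = (t + s) / t := by field_simp
    rw [h1, Real.div_rpow htpos.le ht.le, Real.rpow_sub ht, Real.rpow_one]
    have htg : (0:ℝ) < t ^ (1 / γ) := Real.rpow_pos_of_pos ht _
    field_simp
  calc Real.log (w (t + s)) - Real.log (w t) ≤ C * (Real.log (t + s) - Real.log t) := hmain
  _ = t * w' t * (1 + s / t) ^ (1 / γ) * Real.log (1 + s / t) / w (t + s) := by
      rw [hlog, hC, div_mul_eq_mul_div]
      congr 1
      linear_combination (w' t * Real.log (1 + s / t)) * hpow
end

section
/- Let E ⊂ 𝕋 be a generalized Cantor set constructed from lengths (l_n) with λ := sup_n l_{n+1}/l_n < 1/2. Then |E_t| = O(t^μ) as t → 0, where μ = 1 − log 2 / log(1/λ) and E_t is the closed t-neighborhood of E in arclength distance. -/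
open Set Metric MeasureTheory

/-- The generalized Cantor set in `ℝ` associated to lengths `(l_n)`. -/
def genCantorSet (l : ℕ → ℝ) : Set ℝ :=
  ⋂ n : ℕ, ⋃ s : Fin n → Bool,
    Set.Icc (∑ k : Fin n, if s k then l k.val - l (k.val + 1) else 0)
      ((∑ k : Fin n, if s k then l k.val - l (k.val + 1) else 0) + l n)

/-- At stage `n`, the `t`-neighborhood of the Cantor set image in the circle is covered by
`2^n` closed balls of radius `l n / 2 + t`, giving the measure bound `2^n * (l n + 2t)`. -/
theorem cantor_cover [Fact (0 < 2 * Real.pi)] (l : ℕ → ℝ) (hl : ∀ n, 0 < l n)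
    (n : ℕ) (t : ℝ) (ht : 0 ≤ t) :
    volume {ζ : AddCircle (2 * Real.pi) |
        Metric.infDist ζ ((fun x : ℝ => (x : AddCircle (2 * Real.pi))) '' genCantorSet l) ≤ t}
      ≤ ENNReal.ofReal (2 ^ n * (l n + 2 * t)) := by
  classical
  set p := 2 * Real.pi with hp
  set π : ℝ → AddCircle p := fun x => (x : AddCircle p) with hπ
  set E := genCantorSet l with hE
  have hπdist : ∀ x y : ℝ, dist (π x) (π y) ≤ dist x y := by
    intro x y
    rw [dist_eq_norm, dist_eq_norm]
    have hsub : π x - π y = ((x - y : ℝ) : AddCircle p) := rfl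
    rw [hsub]
    exact QuotientAddGroup.norm_mk_le_norm
  have h0E : (0 : ℝ) ∈ E := by
    rw [hE, genCantorSet, Set.mem_iInter]
    intro m
    refine Set.mem_iUnion.mpr ⟨fun _ => false, ?_⟩
    simp [Set.mem_Icc, (hl m).le]
  have hEclosed : IsClosed E := by
    rw [hE, genCantorSet]
    exact isClosed_iInter fun m => isClosed_iUnion_of_finite fun s => isClosed_Icc
  have hEsub : E ⊆ Set.Icc (0 : ℝ) (0 + l 0) := by
    intro x hx
    rw [hE, genCantorSet, Set.mem_iInter] at hx
    have := hx 0
    simpa using this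
  have hEcomp : IsCompact E := (isCompact_Icc).of_isClosed_subset hEclosed hEsub
  have himg : IsCompact (π '' E) := hEcomp.image continuous_quotient_mk'
  have hne : (π '' E).Nonempty := ⟨π 0, 0, h0E, rfl⟩
  -- covering by balls
  have hcov : {ζ : AddCircle p | Metric.infDist ζ (π '' E) ≤ t} ⊆
      ⋃ s : Fin n → Bool, Metric.closedBall
        (π ((∑ k : Fin n, if s k then l k.val - l (k.val + 1) else 0) + l n / 2))
        (l n / 2 + t) := by
    intro ζ hζ
    obtain ⟨y, hy, hyd⟩ := himg.exists_infDist_eq_dist hne ζ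
    obtain ⟨x, hxE, rfl⟩ := hy
    have hxS : x ∈ ⋃ s : Fin n → Bool,
        Set.Icc (∑ k : Fin n, if s k then l k.val - l (k.val + 1) else 0)
          ((∑ k : Fin n, if s k then l k.val - l (k.val + 1) else 0) + l n) := by
      rw [hE, genCantorSet, Set.mem_iInter] at hxE
      exact hxE n
    obtain ⟨s, hs⟩ := Set.mem_iUnion.mp hxS
    refine Set.mem_iUnion.mpr ⟨s, ?_⟩
    rw [Metric.mem_closedBall]
    have h1 : dist ζ (π x) ≤ t := by
      rw [← hyd]; exact hζ
    have h2 : dist (π x)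
        (π ((∑ k : Fin n, if s k then l k.val - l (k.val + 1) else 0) + l n / 2)) ≤ l n / 2 := by
      refine (hπdist _ _).trans ?_
      rw [Real.dist_eq, abs_le]
      obtain ⟨hs1, hs2⟩ := hs
      constructor <;> linarith
    calc dist ζ (π ((∑ k : Fin n, if s k then l k.val - l (k.val + 1) else 0) + l n / 2))
        ≤ dist ζ (π x) + dist (π x) _ := dist_triangle _ _ _
      _ ≤ t + l n / 2 := add_le_add h1 h2
      _ = l n / 2 + t := by ring
  calc volume {ζ : AddCircle p | Metric.infDist ζ (π '' E) ≤ t}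
      ≤ volume (⋃ s : Fin n → Bool, Metric.closedBall
          (π ((∑ k : Fin n, if s k then l k.val - l (k.val + 1) else 0) + l n / 2))
          (l n / 2 + t)) := measure_mono hcov
    _ ≤ ∑' s : Fin n → Bool, volume (Metric.closedBall
          (π ((∑ k : Fin n, if s k then l k.val - l (k.val + 1) else 0) + l n / 2))
          (l n / 2 + t)) := measure_iUnion_le _
    _ = ∑' _s : Fin n → Bool, ENNReal.ofReal (min p (2 * (l n / 2 + t))) := by
        simp_rw [AddCircle.volume_closedBall]
    _ = (2 ^ n : ℕ) * ENNReal.ofReal (min p (2 * (l n / 2 + t))) := by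
        rw [tsum_fintype, Finset.sum_const, Finset.card_univ, nsmul_eq_mul]
        congr 1
        simp [Fintype.card_fun]
    _ ≤ ENNReal.ofReal (2 ^ n * (l n + 2 * t)) := by
        rw [ENNReal.ofReal_mul (by positivity : (0:ℝ) ≤ (2:ℝ) ^ n)]
        gcongr
        · rw [show ((2:ℝ) ^ n) = ((2 ^ n : ℕ) : ℝ) by push_cast; ring,
            ENNReal.ofReal_natCast]
        · exact (min_le_right _ _).trans (by linarith)

/-- For a generalized Cantor set `E ⊆ 𝕋` built from lengths `(l_n)` with
`l_{n+1}/l_n ≤ λ < 1/2`, one has `|E_t| = O(t^μ)` as `t → 0`, where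
`μ = 1 − log 2 / log(1/λ)`. -/
theorem stmt_13 [Fact (0 < 2 * Real.pi)]
    (l : ℕ → ℝ) (lam : ℝ) (hl : ∀ n, 0 < l n) (hl2 : ∀ n, l n < 2 * Real.pi)
    (hub : ∀ n, l (n + 1) / l n ≤ lam) (hlam : lam < 1 / 2) :
    ∃ C > (0 : ℝ), ∃ t₀ > (0 : ℝ), ∀ t ∈ Set.Ioo (0 : ℝ) t₀,
      (volume {ζ : AddCircle (2 * Real.pi) |
          Metric.infDist ζ ((fun x : ℝ => (x : AddCircle (2 * Real.pi))) '' genCantorSet l) ≤ t}).toReal ≤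
        C * t ^ (1 - Real.log 2 / Real.log (1 / lam)) := by
  classical
  have hlam0 : 0 < lam := lt_of_lt_of_le (div_pos (hl 1) (hl 0)) (hub 0)
  have hloglam : 0 < Real.log (1 / lam) := by
    apply Real.log_pos
    rw [lt_div_iff₀ hlam0]
    linarith
  have hlog2 : 0 < Real.log 2 := Real.log_pos one_lt_two
  set α := Real.log 2 / Real.log (1 / lam) with hα
  have hα0 : 0 < α := div_pos hlog2 hloglam
  have hln : ∀ n, l n ≤ lam ^ n * l 0 := by
    intro n
    induction n with
    | zero => simp
    | succ n ih =>
      have h := hub n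
      rw [div_le_iff₀ (hl n)] at h
      calc l (n + 1) ≤ lam * l n := by linarith
        _ ≤ lam * (lam ^ n * l 0) := by nlinarith
        _ = lam ^ (n + 1) * l 0 := by ring
  refine ⟨6 * l 0 ^ α, mul_pos (by norm_num) (Real.rpow_pos_of_pos (hl 0) _), l 0, hl 0, ?_⟩
  rintro t ⟨ht0, htl⟩
  have hex : ∃ n, lam ^ n * l 0 ≤ t := by
    obtain ⟨n, hn⟩ := exists_pow_lt_of_lt_one (div_pos ht0 (hl 0)) (by linarith : lam < 1)
    exact ⟨n, by rw [← le_div_iff₀ (hl 0)]; exact hn.le⟩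
  set n := Nat.find hex with hndef
  have hP : lam ^ n * l 0 ≤ t := Nat.find_spec hex
  have hn0 : n ≠ 0 := by
    intro h
    rw [h] at hP
    simp at hP
    linarith
  have hprev : t < lam ^ (n - 1) * l 0 := by
    have := Nat.find_min hex (m := n - 1) (Nat.sub_lt (Nat.pos_of_ne_zero hn0) one_pos)
    push_neg at this
    exact this
  -- `2^(n-1) ≤ (l 0 / t)^α`
  have key : ((n - 1 : ℕ) : ℝ) * Real.log (1 / lam) ≤ Real.log (l 0 / t) := by
    have h1 : t / l 0 < lam ^ (n - 1) := by
      rw [div_lt_iff₀ (hl 0)]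
      linarith
    have h2 : Real.log (t / l 0) < Real.log (lam ^ (n - 1)) :=
      Real.log_lt_log (div_pos ht0 (hl 0)) h1
    rw [Real.log_pow, Real.log_div (ne_of_gt ht0) (ne_of_gt (hl 0))] at h2
    rw [Real.log_div one_ne_zero (ne_of_gt hlam0), Real.log_one,
      Real.log_div (ne_of_gt (hl 0)) (ne_of_gt ht0)]
    linarith
  have h2n : (2 : ℝ) ^ (n - 1) ≤ (l 0 / t) ^ α := by
    have hlt : ((n - 1 : ℕ) : ℝ) * Real.log 2 ≤ α * Real.log (l 0 / t) := by
      have hmul := mul_le_mul_of_nonneg_right key hα0.le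
      calc ((n - 1 : ℕ) : ℝ) * Real.log 2
          = ((n - 1 : ℕ) : ℝ) * Real.log (1 / lam) * α := by
            rw [hα]
            field_simp
        _ ≤ Real.log (l 0 / t) * α := hmul
        _ = α * Real.log (l 0 / t) := mul_comm _ _
    calc (2 : ℝ) ^ (n - 1) = Real.exp (((n - 1 : ℕ) : ℝ) * Real.log 2) := by
          rw [← Real.log_pow, Real.exp_log (by positivity)]
      _ ≤ Real.exp (α * Real.log (l 0 / t)) := Real.exp_le_exp.mpr hlt
      _ = (l 0 / t) ^ α := by
          rw [Real.rpow_def_of_pos (div_pos (hl 0) ht0), mul_comm]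
  have hvol := cantor_cover l hl n t ht0.le
  have hto : (volume {ζ : AddCircle (2 * Real.pi) |
      Metric.infDist ζ ((fun x : ℝ => (x : AddCircle (2 * Real.pi))) '' genCantorSet l) ≤ t}).toReal
      ≤ 2 ^ n * (l n + 2 * t) :=
    ENNReal.toReal_le_of_le_ofReal
      (mul_nonneg (by positivity) (by linarith [hl n])) hvol
  refine hto.trans ?_
  have h1 : l n + 2 * t ≤ 3 * t := by
    have := (hln n).trans hP
    linarith
  have h2 : (2 : ℝ) ^ n = 2 * 2 ^ (n - 1) := by
    rw [← pow_succ']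
    congr 1
    omega
  have htα : (0 : ℝ) < t ^ α := Real.rpow_pos_of_pos ht0 _
  calc (2 : ℝ) ^ n * (l n + 2 * t)
      ≤ (2 * (l 0 / t) ^ α) * (3 * t) := by
        rw [h2]
        apply mul_le_mul (by linarith) h1 (by linarith [hl n])
          (mul_nonneg (by norm_num) (Real.rpow_nonneg (div_nonneg (hl 0).le ht0.le) _))
    _ = 6 * ((l 0 / t) ^ α * t) := by ring
    _ = 6 * l 0 ^ α * t ^ (1 - α) := by
        rw [Real.div_rpow (hl 0).le ht0.le, Real.rpow_sub ht0, Real.rpow_one]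
        field_simp
end
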